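/- Let U* ∈ ℝ^{n×d} with orthonormal columns, let A ∈ ℝ^{d×N} with rank(A) = d and smallest singular value σ_min(A) > 0, let E ∈ ℝ^{n×N}, and set X = U*A + E. If Û ∈ ℝ^{n×d} is orthonormal and its columns are left singular vectors of X corresponding to its top d singular values, then ‖ÛÛᵀ − U*U*ᵀ‖_F ≤ 4‖E‖_F / σ_min(A). -/

import Mathlib

open Matrix

section auxlemmas
variable {m p : Type*} [Fintype m] [Fintype p]

noncomputable def fro2 (M : Matrix m p ℝ) : ℝ := ∑ i, ∑ j, M i j ^ 2

lemma fro2_nonneg (M : Matrix m p ℝ) : 0 ≤ fro2 M :=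
  Finset.sum_nonneg fun _ _ => Finset.sum_nonneg fun _ _ => sq_nonneg _

lemma fro2_eq_trace (M : Matrix m p ℝ) : fro2 M = trace (Mᵀ * M) := by
  simp only [fro2, trace, Matrix.diag, Matrix.mul_apply, transpose_apply, pow_two]
  rw [Finset.sum_comm]

lemma fro2_neg (M : Matrix m p ℝ) : fro2 (-M) = fro2 M := by
  simp [fro2]

lemma fro2_triangle (M N : Matrix m p ℝ) :
    Real.sqrt (fro2 (M + N)) ≤ Real.sqrt (fro2 M) + Real.sqrt (fro2 N) := by
  have hc : (∑ q : m × p, M q.1 q.2 * N q.1 q.2) ^ 2 ≤ fro2 M * fro2 N := by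
    have := Finset.sum_mul_sq_le_sq_mul_sq Finset.univ
      (fun q : m × p => M q.1 q.2) (fun q : m × p => N q.1 q.2)
    simpa [fro2, Fintype.sum_prod_type] using this
  have hc' : ∑ q : m × p, M q.1 q.2 * N q.1 q.2
      ≤ Real.sqrt (fro2 M) * Real.sqrt (fro2 N) := by
    calc (∑ q : m × p, M q.1 q.2 * N q.1 q.2) ≤ |∑ q : m × p, M q.1 q.2 * N q.1 q.2| :=
          le_abs_self _
      _ = Real.sqrt ((∑ q : m × p, M q.1 q.2 * N q.1 q.2) ^ 2) := (Real.sqrt_sq_eq_abs _).symm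
      _ ≤ Real.sqrt (fro2 M * fro2 N) := Real.sqrt_le_sqrt hc
      _ = Real.sqrt (fro2 M) * Real.sqrt (fro2 N) := Real.sqrt_mul (fro2_nonneg M) _
  have hexp : fro2 (M + N) = fro2 M + 2 * (∑ q : m × p, M q.1 q.2 * N q.1 q.2) + fro2 N := by
    simp only [fro2, Matrix.add_apply, Fintype.sum_prod_type, add_sq,
      Finset.sum_add_distrib, Finset.mul_sum]
    ring
  have h1 : fro2 (M + N) ≤ (Real.sqrt (fro2 M) + Real.sqrt (fro2 N)) ^ 2 := by
    rw [hexp, add_sq, Real.sq_sqrt (fro2_nonneg M), Real.sq_sqrt (fro2_nonneg N)]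
    nlinarith [hc']
  calc Real.sqrt (fro2 (M + N)) ≤ Real.sqrt ((Real.sqrt (fro2 M) + Real.sqrt (fro2 N)) ^ 2) :=
        Real.sqrt_le_sqrt h1
    _ = _ := Real.sqrt_sq (by positivity)

lemma proj_fro2 {d' : Type*} [Fintype d'] [DecidableEq d']
    (Q : Matrix m d' ℝ) (hQ : Qᵀ * Q = 1) (Y : Matrix m p ℝ) :
    fro2 (Y - Q * (Qᵀ * Y)) = fro2 Y - fro2 (Qᵀ * Y) := by
  have hQ' : ∀ (W : Matrix d' p ℝ), Qᵀ * (Q * W) = W := fun W => by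
    rw [← Matrix.mul_assoc, hQ, Matrix.one_mul]
  rw [fro2_eq_trace, fro2_eq_trace, fro2_eq_trace, ← trace_sub]
  congr 1
  have : (Y - Q * (Qᵀ * Y))ᵀ * (Y - Q * (Qᵀ * Y)) = Yᵀ * Y - (Qᵀ * Y)ᵀ * (Qᵀ * Y) := by
    simp only [transpose_sub, transpose_mul, transpose_transpose, Matrix.sub_mul,
      Matrix.mul_sub, Matrix.mul_assoc, hQ']
    abel
  rw [this]

end auxlemmas


/-- Smallest singular value of a `d × N` matrix `A` (for `rank A = d`): the
infimum of `‖uᵀA‖` over unit vectors `u ∈ ℝ^d`. -/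
noncomputable def sminRow {d N : ℕ} (A : Matrix (Fin d) (Fin N) ℝ) : ℝ :=
  sInf {r : ℝ | ∃ u : Fin d → ℝ, Real.sqrt (∑ j, u j ^ 2) = 1 ∧
    r = Real.sqrt (∑ j, (Matrix.vecMul u A) j ^ 2)}

lemma smin_mul_le {d N : ℕ} (A : Matrix (Fin d) (Fin N) ℝ) (u : Fin d → ℝ) :
    sminRow A * Real.sqrt (∑ j, u j ^ 2) ≤ Real.sqrt (∑ j, (Matrix.vecMul u A) j ^ 2) := by
  have hbdd : BddBelow {r : ℝ | ∃ u : Fin d → ℝ, Real.sqrt (∑ j, u j ^ 2) = 1 ∧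
      r = Real.sqrt (∑ j, (Matrix.vecMul u A) j ^ 2)} := by
    refine ⟨0, fun r hr => ?_⟩
    obtain ⟨v, -, rfl⟩ := hr
    exact Real.sqrt_nonneg _
  by_cases h0 : (∑ j, u j ^ 2) = 0
  · have hu : u = 0 := by
      funext j
      have := (Finset.sum_eq_zero_iff_of_nonneg (fun i _ => sq_nonneg (u i))).mp h0 j
        (Finset.mem_univ j)
      exact pow_eq_zero_iff (n := 2) (by norm_num) |>.mp this
    simp [hu, h0]
  · have hpos : 0 < ∑ j, u j ^ 2 :=
      lt_of_le_of_ne (Finset.sum_nonneg fun i _ => sq_nonneg _) (Ne.symm h0)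
    set c := Real.sqrt (∑ j, u j ^ 2) with hc
    have hcpos : 0 < c := Real.sqrt_pos.mpr hpos
    have hcsq : c ^ 2 = ∑ j, u j ^ 2 := Real.sq_sqrt hpos.le
    have hmem : Real.sqrt (∑ j, (Matrix.vecMul (c⁻¹ • u) A) j ^ 2) ∈
        {r : ℝ | ∃ v : Fin d → ℝ, Real.sqrt (∑ j, v j ^ 2) = 1 ∧
          r = Real.sqrt (∑ j, (Matrix.vecMul v A) j ^ 2)} := by
      refine ⟨c⁻¹ • u, ?_, rfl⟩
      have : (∑ j, (c⁻¹ • u) j ^ 2) = c⁻¹ ^ 2 * ∑ j, u j ^ 2 := by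
        simp [Pi.smul_apply, mul_pow, Finset.mul_sum, smul_eq_mul]
      rw [this, ← hcsq]
      rw [show c⁻¹ ^ 2 * c ^ 2 = 1 by field_simp]
      exact Real.sqrt_one
    have hle := csInf_le hbdd hmem
    have hvm : Matrix.vecMul (c⁻¹ • u) A = c⁻¹ • Matrix.vecMul u A := by
      ext j; simp [Matrix.vecMul, dotProduct, Finset.mul_sum, mul_assoc]
    have hsum : (∑ j, (Matrix.vecMul (c⁻¹ • u) A) j ^ 2)
        = c⁻¹ ^ 2 * ∑ j, (Matrix.vecMul u A) j ^ 2 := by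
      rw [hvm]; simp [Pi.smul_apply, mul_pow, Finset.mul_sum, smul_eq_mul]
    rw [hsum, Real.sqrt_mul (by positivity), Real.sqrt_sq (by positivity)] at hle
    have hle' : sminRow A ≤ c⁻¹ * Real.sqrt (∑ j, (Matrix.vecMul u A) j ^ 2) := hle
    calc sminRow A * c ≤ c⁻¹ * Real.sqrt (∑ j, (Matrix.vecMul u A) j ^ 2) * c :=
          mul_le_mul_of_nonneg_right hle' hcpos.le
      _ = Real.sqrt (∑ j, (Matrix.vecMul u A) j ^ 2) := by field_simp

lemma fro2_mul_ge {k : Type*} [Fintype k] {d N : ℕ} (A : Matrix (Fin d) (Fin N) ℝ)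
    (hs : 0 ≤ sminRow A) (M : Matrix k (Fin d) ℝ) :
    sminRow A ^ 2 * fro2 M ≤ fro2 (M * A) := by
  rw [fro2, fro2, Finset.mul_sum]
  apply Finset.sum_le_sum
  intro i _
  have h := smin_mul_le A (M i)
  have h2 : (sminRow A * Real.sqrt (∑ j, M i j ^ 2)) ^ 2
      ≤ (Real.sqrt (∑ j, (Matrix.vecMul (M i) A) j ^ 2)) ^ 2 :=
    pow_le_pow_left₀ (mul_nonneg hs (Real.sqrt_nonneg _)) h 2
  rw [mul_pow, Real.sq_sqrt (Finset.sum_nonneg fun _ _ => sq_nonneg _),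
    Real.sq_sqrt (Finset.sum_nonneg fun _ _ => sq_nonneg _)] at h2
  convert h2 using 2 <;> rfl


/-- Wedin-type bound: for `X = U*A + E` with `U*` orthonormal, `rank A = d`,
`σ_min(A) > 0`, and `Û` orthonormal whose columns span a top-`d` left singular
subspace of `X` (i.e. `Û` maximizes `‖VᵀX‖_F` over orthonormal `V`), one has
`‖ÛÛᵀ − U*U*ᵀ‖_F ≤ 4‖E‖_F / σ_min(A)`. -/
theorem stmt16 {n d N : ℕ} (Us : Matrix (Fin n) (Fin d) ℝ) (hUs : Usᵀ * Us = 1)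
    (A : Matrix (Fin d) (Fin N) ℝ) (hrank : A.rank = d) (hsmin : 0 < sminRow A)
    (E : Matrix (Fin n) (Fin N) ℝ)
    (X : Matrix (Fin n) (Fin N) ℝ) (hX : X = Us * A + E)
    (Uh : Matrix (Fin n) (Fin d) ℝ) (hUh : Uhᵀ * Uh = 1)
    (htop : ∀ V : Matrix (Fin n) (Fin d) ℝ, Vᵀ * V = 1 →
        ∑ i, ∑ j, (Vᵀ * X) i j ^ 2 ≤ ∑ i, ∑ j, (Uhᵀ * X) i j ^ 2) :
    Real.sqrt (∑ i, ∑ j, (Uh * Uhᵀ - Us * Usᵀ) i j ^ 2)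
      ≤ 4 * Real.sqrt (∑ i, ∑ j, E i j ^ 2) / sminRow A := by
  set σ := sminRow A with hσ
  set ε := Real.sqrt (fro2 E) with hε
  have hεnn : 0 ≤ ε := Real.sqrt_nonneg _
  have hQ'h : ∀ (W : Matrix (Fin d) (Fin N) ℝ), Uhᵀ * (Uh * W) = W := fun W => by
    rw [← Matrix.mul_assoc, hUh, Matrix.one_mul]
  have hQ's : ∀ (W : Matrix (Fin d) (Fin N) ℝ), Usᵀ * (Us * W) = W := fun W => by
    rw [← Matrix.mul_assoc, hUs, Matrix.one_mul]
  -- residual bounds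
  have h1 : fro2 (X - Uh * (Uhᵀ * X)) = fro2 X - fro2 (Uhᵀ * X) := proj_fro2 Uh hUh X
  have h2 : fro2 (X - Us * (Usᵀ * X)) = fro2 X - fro2 (Usᵀ * X) := proj_fro2 Us hUs X
  have htop' : fro2 (Usᵀ * X) ≤ fro2 (Uhᵀ * X) := htop Us hUs
  have h3 : X - Us * (Usᵀ * X) = E - Us * (Usᵀ * E) := by
    rw [hX]
    rw [Matrix.mul_add Usᵀ, hQ's, Matrix.mul_add]
    abel
  have h4 : fro2 (E - Us * (Usᵀ * E)) = fro2 E - fro2 (Usᵀ * E) := proj_fro2 Us hUs E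
  have h2' : fro2 E - fro2 (Usᵀ * E) = fro2 X - fro2 (Usᵀ * X) := by
    rw [← h4, ← h3, h2]
  have h5 : fro2 (X - Uh * (Uhᵀ * X)) ≤ fro2 E := by
    rw [h1]
    have := fro2_nonneg (Usᵀ * E)
    linarith
  have h6 : fro2 (E - Uh * (Uhᵀ * E)) ≤ fro2 E := by
    rw [proj_fro2 Uh hUh E]
    have := fro2_nonneg (Uhᵀ * E)
    linarith
  -- the key matrix identity
  have hWA : (Us - Uh * (Uhᵀ * Us)) * A
      = (X - Uh * (Uhᵀ * X)) + -(E - Uh * (Uhᵀ * E)) := by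
    simp only [hX, Matrix.mul_add, Matrix.sub_mul, Matrix.mul_assoc]
    abel
  have hlhs : σ * Real.sqrt (fro2 (Us - Uh * (Uhᵀ * Us)))
      ≤ Real.sqrt (fro2 ((Us - Uh * (Uhᵀ * Us)) * A)) := by
    have := fro2_mul_ge A hsmin.le (Us - Uh * (Uhᵀ * Us))
    calc σ * Real.sqrt (fro2 (Us - Uh * (Uhᵀ * Us)))
        = Real.sqrt (σ ^ 2 * fro2 (Us - Uh * (Uhᵀ * Us))) := by
          rw [Real.sqrt_mul (by positivity), Real.sqrt_sq hsmin.le]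
      _ ≤ _ := Real.sqrt_le_sqrt this
  have hrhs : Real.sqrt (fro2 ((Us - Uh * (Uhᵀ * Us)) * A)) ≤ 2 * ε := by
    rw [hWA]
    refine le_trans (fro2_triangle _ _) ?_
    have ha : Real.sqrt (fro2 (X - Uh * (Uhᵀ * X))) ≤ ε := Real.sqrt_le_sqrt h5
    have hb : Real.sqrt (fro2 (-(E - Uh * (Uhᵀ * E)))) ≤ ε := by
      rw [fro2_neg]; exact Real.sqrt_le_sqrt h6
    linarith
  have hW : fro2 (Us - Uh * (Uhᵀ * Us)) ≤ (2 * ε / σ) ^ 2 := by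
    have hs : Real.sqrt (fro2 (Us - Uh * (Uhᵀ * Us))) ≤ 2 * ε / σ := by
      rw [le_div_iff₀ hsmin]
      calc Real.sqrt (fro2 (Us - Uh * (Uhᵀ * Us))) * σ
          = σ * Real.sqrt (fro2 (Us - Uh * (Uhᵀ * Us))) := mul_comm _ _
        _ ≤ 2 * ε := le_trans hlhs hrhs
    calc fro2 (Us - Uh * (Uhᵀ * Us))
        = (Real.sqrt (fro2 (Us - Uh * (Uhᵀ * Us)))) ^ 2 :=
          (Real.sq_sqrt (fro2_nonneg _)).symm
      _ ≤ (2 * ε / σ) ^ 2 := pow_le_pow_left₀ (Real.sqrt_nonneg _) hs 2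
  -- trace identity: fro2 (P - P*) = 2 * fro2 (Us - P Us)
  have tUh : trace (Uh * Uhᵀ) = (d : ℝ) := by
    rw [trace_mul_comm, hUh, trace_one]; simp
  have tUs : trace (Us * Usᵀ) = (d : ℝ) := by
    rw [trace_mul_comm, hUs, trace_one]; simp
  have hPP : Uh * Uhᵀ * (Uh * Uhᵀ) = Uh * Uhᵀ := by
    rw [Matrix.mul_assoc, ← Matrix.mul_assoc Uhᵀ, hUh, Matrix.one_mul]
  have hPsPs : Us * Usᵀ * (Us * Usᵀ) = Us * Usᵀ := by
    rw [Matrix.mul_assoc, ← Matrix.mul_assoc Usᵀ, hUs, Matrix.one_mul]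
  have t3 : trace (Uh * Uhᵀ * (Us * Usᵀ)) = fro2 (Uhᵀ * Us) := by
    rw [fro2_eq_trace]
    have e1 : Uh * Uhᵀ * (Us * Usᵀ) = (Uh * (Uhᵀ * Us)) * Usᵀ := by
      simp [Matrix.mul_assoc]
    rw [e1, trace_mul_comm]
    congr 1
    rw [transpose_mul, transpose_transpose, Matrix.mul_assoc]
  have t4 : trace (Us * Usᵀ * (Uh * Uhᵀ)) = fro2 (Uhᵀ * Us) := by
    rw [trace_mul_comm]; exact t3
  have hfroUs : fro2 Us = (d : ℝ) := by
    rw [fro2_eq_trace, hUs, trace_one]; simp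
  have hRHSkey : fro2 (Us - Uh * (Uhᵀ * Us)) = (d : ℝ) - fro2 (Uhᵀ * Us) := by
    rw [proj_fro2 Uh hUh Us, hfroUs]
  have hexp : (Uh * Uhᵀ - Us * Usᵀ)ᵀ * (Uh * Uhᵀ - Us * Usᵀ)
      = Uh * Uhᵀ * (Uh * Uhᵀ) - Uh * Uhᵀ * (Us * Usᵀ)
        - (Us * Usᵀ * (Uh * Uhᵀ) - Us * Usᵀ * (Us * Usᵀ)) := by
    simp only [transpose_sub, transpose_mul, transpose_transpose, Matrix.sub_mul,
      Matrix.mul_sub]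
    abel
  have hkey : fro2 (Uh * Uhᵀ - Us * Usᵀ) = 2 * fro2 (Us - Uh * (Uhᵀ * Us)) := by
    rw [fro2_eq_trace, hexp, hPP, hPsPs, trace_sub, trace_sub, trace_sub,
      tUh, tUs, t3, t4, hRHSkey]
    ring
  -- conclusion
  have hfinal : fro2 (Uh * Uhᵀ - Us * Usᵀ) ≤ (4 * ε / σ) ^ 2 := by
    rw [hkey]
    have e1 : 2 * ((2 * ε / σ) ^ 2) = 8 * (ε / σ) ^ 2 := by ring
    have e2 : (4 * ε / σ) ^ 2 = 16 * (ε / σ) ^ 2 := by ring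
    have e3 : 0 ≤ (ε / σ) ^ 2 := sq_nonneg _
    linarith
  show Real.sqrt (fro2 (Uh * Uhᵀ - Us * Usᵀ)) ≤ 4 * ε / σ
  calc Real.sqrt (fro2 (Uh * Uhᵀ - Us * Usᵀ)) ≤ Real.sqrt ((4 * ε / σ) ^ 2) :=
        Real.sqrt_le_sqrt hfinal
    _ = 4 * ε / σ := Real.sqrt_sq (by positivity)
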